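/- Let (m₁, m₂) be a linear pair of matching dependencies over distinct relational predicates R and S, i.e., the MD graph of {m₁, m₂} has exactly one edge, from m₁ to m₂, and is acyclic (in particular RHS(m₁) ∩ LHS(m₁) = ∅ and RHS(m₂) ∩ LHS(m₂) = ∅). Assume moreover that the set {m₁, m₂} is pair-preserving and that LHS(m₁) ∩ LHS(m₂) = ∅. Then no R-equivalent set and no S-equivalent set of (m₁, m₂) is bound; that is, for every equivalence class E of TC(B_R) (respectively TC(B_S)) that contains an attribute of LHS(m₂), we have E ∩ LHS(m₁) = ∅. (This is the paper's claim that, under the pair-preserving requirement used in its main theorem, there cannot be a bound equivalent set for any pair of MDs in the set, which is why the boundedness condition of the linear-pair theorem does not appear in the main theorem.) -/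

import Mathlib

/-- A matching dependency (MD) over two distinct relational predicates `R` and `S`:
`α` is the type of attributes of `R`, `β` the type of attributes of `S`.
Each conjunct `R[A] ≈ S[B]` (on the LHS) or `R[A] ≐ S[B]` (on the RHS)
pairs an attribute of `R` with an attribute of `S`; we record the finite sets
of such pairs. -/
structure MD2 (α β : Type*) where
  lhsP : Finset (α × β)
  rhsP : Finset (α × β)

variable {α β : Type*}

/-- `LHS(m)`: the set of attributes (of `R`, tagged `Sum.inl`, or of `S`,
tagged `Sum.inr`) occurring on the left-hand side of `m`. -/
def lhsAttrs (m : MD2 α β) : Set (α ⊕ β) :=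
  {x | ∃ p ∈ m.lhsP, x = Sum.inl p.1 ∨ x = Sum.inr p.2}

/-- `RHS(m)`: the set of attributes occurring on the right-hand side of `m`. -/
def rhsAttrs (m : MD2 α β) : Set (α ⊕ β) :=
  {x | ∃ p ∈ m.rhsP, x = Sum.inl p.1 ∨ x = Sum.inr p.2}

/-- Edge of the MD graph: from `m` to `m'` iff `RHS(m) ∩ LHS(m') ≠ ∅`. -/
def MDEdge (m m' : MD2 α β) : Prop := (rhsAttrs m ∩ lhsAttrs m').Nonempty

/-- `(m₁, m₂)` is a linear pair: the MD graph of `{m₁, m₂}` has exactly one edge,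
from `m₁` to `m₂` (in particular it is acyclic: no self-loops, so
`RHS(m₁) ∩ LHS(m₁) = ∅` and `RHS(m₂) ∩ LHS(m₂) = ∅`). -/
def LinearPair (m₁ m₂ : MD2 α β) : Prop :=
  MDEdge m₁ m₂ ∧ ¬ MDEdge m₂ m₁ ∧ ¬ MDEdge m₁ m₁ ∧ ¬ MDEdge m₂ m₂

/-- `LRel(m)`: the symmetric relation on attributes relating `R[A]` and `S[B]`
whenever the conjunct `R[A] ≈ S[B]` appears in `LHS(m)`. -/
def LRel (m : MD2 α β) (x y : α ⊕ β) : Prop :=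
  ∃ p ∈ m.lhsP, (x = Sum.inl p.1 ∧ y = Sum.inr p.2) ∨ (x = Sum.inr p.2 ∧ y = Sum.inl p.1)

/-- `RRel(m)`: the symmetric relation on attributes relating `R[A]` and `S[B]`
whenever the conjunct `R[A] ≐ S[B]` appears in `RHS(m)`. -/
def RRel (m : MD2 α β) (x y : α ⊕ β) : Prop :=
  ∃ p ∈ m.rhsP, (x = Sum.inl p.1 ∧ y = Sum.inr p.2) ∨ (x = Sum.inr p.2 ∧ y = Sum.inl p.1)

/-- `x` and `y` are in the same L-component of `m`: they are related by the
reflexive and transitive closure of `LRel(m)`. -/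
def SameLComp (m : MD2 α β) (x y : α ⊕ β) : Prop := Relation.ReflTransGen (LRel m) x y

/-- `x` and `y` are in the same R-component of `m`. -/
def SameRComp (m : MD2 α β) (x y : α ⊕ β) : Prop := Relation.ReflTransGen (RRel m) x y

/-- The relation `B_R` on attributes of `R`: `(R[U₁], R[U₂]) ∈ B_R` iff `R[U₁]`
and `R[U₂]` are in the same R-component of `m₁` or the same L-component of `m₂`. -/
def BR (m₁ m₂ : MD2 α β) (u₁ u₂ : α) : Prop :=
  SameRComp m₁ (Sum.inl u₁) (Sum.inl u₂) ∨ SameLComp m₂ (Sum.inl u₁) (Sum.inl u₂)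

/-- The relation `B_S` on attributes of `S`, defined analogously. -/
def BS (m₁ m₂ : MD2 α β) (u₁ u₂ : β) : Prop :=
  SameRComp m₁ (Sum.inr u₁) (Sum.inr u₂) ∨ SameLComp m₂ (Sum.inr u₁) (Sum.inr u₂)

/-- All conjuncts (pairs of compared attributes) of `m`. -/
def conjs [DecidableEq α] [DecidableEq β] (m : MD2 α β) : Finset (α × β) :=
  m.lhsP ∪ m.rhsP

/-- `{m₁, m₂}` is pair-preserving: for any attribute `R[A]` occurring in an MD,
there is only one attribute `S[B]` such that `R[A] ≈ S[B]` or `R[A] ≐ S[B]`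
occurs in an MD. -/
def PairPreserving [DecidableEq α] [DecidableEq β] (m₁ m₂ : MD2 α β) : Prop :=
  ∀ (a : α) (b b' : β),
    (a, b) ∈ conjs m₁ ∪ conjs m₂ → (a, b') ∈ conjs m₁ ∪ conjs m₂ → b = b'

/-- Generic relation generated by a set of conjuncts. -/
def genRel (T : Finset (α × β)) (x y : α ⊕ β) : Prop :=
  ∃ p ∈ T, (x = Sum.inl p.1 ∧ y = Sum.inr p.2) ∨ (x = Sum.inr p.2 ∧ y = Sum.inl p.1)

lemma genRel_symm (T : Finset (α × β)) : Symmetric (genRel T) := by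
  rintro x y ⟨p, hp, h⟩
  exact ⟨p, hp, h.symm.imp And.symm And.symm⟩

lemma LRel_eq (m : MD2 α β) : LRel m = genRel m.lhsP := rfl
lemma RRel_eq (m : MD2 α β) : RRel m = genRel m.rhsP := rfl

lemma chain_inl {T : Finset (α × β)}
    (hU : ∀ a b b', (a, b) ∈ T → (a, b') ∈ T → b = b')
    {x : α} {z : α ⊕ β} (h : Relation.ReflTransGen (genRel T) (Sum.inl x) z) :
    z = Sum.inl x ∨
      ∃ b, (x, b) ∈ T ∧ (z = Sum.inr b ∨ ∃ a, z = Sum.inl a ∧ (a, b) ∈ T) := by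
  induction h with
  | refl => exact Or.inl rfl
  | tail h₁ h₂ ih =>
    obtain ⟨p, hp, hc⟩ := h₂
    rcases ih with heq | ⟨b, hb, hz⟩
    · subst heq
      rcases hc with ⟨hx, hw⟩ | ⟨hx, hw⟩
      · obtain rfl : x = p.1 := Sum.inl.inj hx
        exact Or.inr ⟨p.2, by simpa using hp, Or.inl hw⟩
      · exact absurd hx (by simp)
    · rcases hz with heq | ⟨a, heq, ha⟩
      · subst heq
        rcases hc with ⟨hx, hw⟩ | ⟨hx, hw⟩
        · exact absurd hx (by simp)
        · obtain rfl : b = p.2 := Sum.inr.inj hx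
          exact Or.inr ⟨p.2, hb, Or.inr ⟨p.1, hw, by simpa using hp⟩⟩
      · subst heq
        rcases hc with ⟨hx, hw⟩ | ⟨hx, hw⟩
        · obtain rfl : a = p.1 := Sum.inl.inj hx
          have : p.2 = b := hU p.1 p.2 b (by simpa using hp) ha
          exact Or.inr ⟨b, hb, Or.inl (this ▸ hw)⟩
        · exact absurd hx (by simp)

lemma chain_inr {T : Finset (α × β)}
    (hU : ∀ a b b', (a, b) ∈ T → (a, b') ∈ T → b = b')
    {x : β} {z : α ⊕ β} (h : Relation.ReflTransGen (genRel T) (Sum.inr x) z) :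
    z = Sum.inr x ∨ ∃ a, (a, x) ∈ T ∧ z = Sum.inl a := by
  induction h with
  | refl => exact Or.inl rfl
  | tail h₁ h₂ ih =>
    obtain ⟨p, hp, hc⟩ := h₂
    rcases ih with heq | ⟨a, ha, heq⟩
    · subst heq
      rcases hc with ⟨hx, hw⟩ | ⟨hx, hw⟩
      · exact absurd hx (by simp)
      · obtain rfl : x = p.2 := Sum.inr.inj hx
        exact Or.inr ⟨p.1, by simpa using hp, hw⟩
    · subst heq
      rcases hc with ⟨hx, hw⟩ | ⟨hx, hw⟩
      · obtain rfl : a = p.1 := Sum.inl.inj hx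
        have : p.2 = x := hU p.1 p.2 x (by simpa using hp) ha
        exact Or.inl (this ▸ hw)
      · exact absurd hx (by simp)

lemma step_inl {T : Finset (α × β)}
    (hU : ∀ a b b', (a, b) ∈ T → (a, b') ∈ T → b = b')
    {x y : α} (h : Relation.ReflTransGen (genRel T) (Sum.inl x) (Sum.inl y))
    (hne : x ≠ y) : ∃ b, (x, b) ∈ T ∧ (y, b) ∈ T := by
  rcases chain_inl hU h with heq | ⟨b, hb, hz⟩
  · exact absurd (Sum.inl.inj heq).symm hne
  · rcases hz with heq | ⟨a, heq, ha⟩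
    · exact absurd heq (by simp)
    · obtain rfl : y = a := Sum.inl.inj heq
      exact ⟨b, hb, ha⟩

lemma step_inr {T : Finset (α × β)}
    (hU : ∀ a b b', (a, b) ∈ T → (a, b') ∈ T → b = b')
    {x y : β} (h : Relation.ReflTransGen (genRel T) (Sum.inr x) (Sum.inr y)) :
    x = y := by
  rcases chain_inr hU h with heq | ⟨a, ha, heq⟩
  · exact (Sum.inr.inj heq).symm
  · exact absurd heq (by simp)

/-- For a linear pair `(m₁, m₂)` over distinct predicates `R` and `S` that is
pair-preserving and satisfies `LHS(m₁) ∩ LHS(m₂) = ∅`, no `R`-equivalent set and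
no `S`-equivalent set is bound: every equivalence class `E` of `TC(B_R)`
(resp. `TC(B_S)`) containing an attribute of `LHS(m₂)` satisfies
`E ∩ LHS(m₁) = ∅`. -/
theorem no_bound_equivalent_set [DecidableEq α] [DecidableEq β]
    (m₁ m₂ : MD2 α β)
    (hlin : LinearPair m₁ m₂)
    (hpp : PairPreserving m₁ m₂)
    (hdisj : lhsAttrs m₁ ∩ lhsAttrs m₂ = ∅) :
    (∀ (E : Set α) (u : α), E = {v | Relation.TransGen (BR m₁ m₂) u v} →
        (∃ a ∈ E, Sum.inl a ∈ lhsAttrs m₂) → ∀ a ∈ E, Sum.inl a ∉ lhsAttrs m₁) ∧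
    (∀ (E : Set β) (u : β), E = {v | Relation.TransGen (BS m₁ m₂) u v} →
        (∃ b ∈ E, Sum.inr b ∈ lhsAttrs m₂) → ∀ b ∈ E, Sum.inr b ∉ lhsAttrs m₁) := by
  classical
  -- uniqueness of partners restricted to the relevant conjunct sets
  have hU1 : ∀ a b b', (a, b) ∈ m₁.rhsP → (a, b') ∈ m₁.rhsP → b = b' := fun a b b' h h' =>
    hpp a b b' (Finset.mem_union_left _ (Finset.mem_union_right _ h))
      (Finset.mem_union_left _ (Finset.mem_union_right _ h'))
  have hU2 : ∀ a b b', (a, b) ∈ m₂.lhsP → (a, b') ∈ m₂.lhsP → b = b' := fun a b b' h h' =>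
    hpp a b b' (Finset.mem_union_right _ (Finset.mem_union_left _ h))
      (Finset.mem_union_right _ (Finset.mem_union_left _ h'))
  set U : Finset (α × β) := m₁.rhsP ∪ m₂.lhsP with hUdef
  have hmemU : ∀ {a : α} {b : β}, (a, b) ∈ U → (a, b) ∈ conjs m₁ ∪ conjs m₂ := by
    intro a b h
    rcases Finset.mem_union.mp h with h | h
    · exact Finset.mem_union_left _ (Finset.mem_union_right _ h)
    · exact Finset.mem_union_right _ (Finset.mem_union_left _ h)
  have hUU : ∀ a b b', (a, b) ∈ U → (a, b') ∈ U → b = b' := fun a b b' h h' =>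
    hpp a b b' (hmemU h) (hmemU h')
  -- a nontrivial BR step yields a common partner in U
  have hBRstep : ∀ u v : α, BR m₁ m₂ u v → u ≠ v → ∃ b, (u, b) ∈ U ∧ (v, b) ∈ U := by
    intro u v h hne
    rcases h with h | h
    · obtain ⟨b, h1, h2⟩ := step_inl hU1 h hne
      exact ⟨b, Finset.mem_union_left _ h1, Finset.mem_union_left _ h2⟩
    · obtain ⟨b, h1, h2⟩ := step_inl hU2 h hne
      exact ⟨b, Finset.mem_union_right _ h1, Finset.mem_union_right _ h2⟩
  -- BR is symmetric, hence so is TransGen BR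
  have hBRsymm : Symmetric (BR m₁ m₂) := by
    intro u v h
    rcases h with h | h
    · exact Or.inl (by haveI : Std.Symm (RRel m₁) := ⟨fun _ _ hab => (show Symmetric (RRel m₁) by rw [RRel_eq]; exact genRel_symm _) hab⟩; exact (Relation.ReflTransGen.symmetric (r := RRel m₁)).symm _ _ h)
    · exact Or.inr (by haveI : Std.Symm (LRel m₂) := ⟨fun _ _ hab => (show Symmetric (LRel m₂) by rw [LRel_eq]; exact genRel_symm _) hab⟩; exact (Relation.ReflTransGen.symmetric (r := LRel m₂)).symm _ _ h)
  have hTGsymm : Symmetric (Relation.TransGen (BR m₁ m₂)) := fun u v h => by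
    induction h with
    | single h => exact Relation.TransGen.single (hBRsymm h)
    | tail h₁ h₂ ih => exact Relation.TransGen.head (hBRsymm h₂) ih
  -- chains: TransGen BR gives equality or a common partner
  have hTGchain : ∀ u v : α, Relation.TransGen (BR m₁ m₂) u v →
      u = v ∨ ∃ b, (u, b) ∈ U ∧ (v, b) ∈ U := by
    intro u v h
    induction h with
    | @single y h =>
      by_cases hne : u = y
      · exact Or.inl hne
      · exact Or.inr (hBRstep _ _ h hne)
    | @tail y z h₁ h₂ ih =>
      by_cases hyz : y = z
      · exact hyz ▸ ih
      obtain ⟨b', hyb', hzb'⟩ := hBRstep _ _ h₂ hyz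
      rcases ih with rfl | ⟨b, hub, hyb⟩
      · exact Or.inr ⟨b', hyb', hzb'⟩
      · have : b = b' := hUU y b b' hyb hyb'
        exact Or.inr ⟨b, hub, this ▸ hzb'⟩
  -- BS is trivial
  have hBSeq : ∀ u v : β, BS m₁ m₂ u v → u = v := by
    intro u v h
    rcases h with h | h
    · exact step_inr hU1 h
    · exact step_inr hU2 h
  have hTGBSeq : ∀ u v : β, Relation.TransGen (BS m₁ m₂) u v → u = v := by
    intro u v h
    induction h with
    | single h => exact hBSeq _ _ h
    | tail h₁ h₂ ih => exact ih.trans (hBSeq _ _ h₂)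
  have hdisj' : ∀ x : α ⊕ β, x ∈ lhsAttrs m₁ → x ∈ lhsAttrs m₂ → False := by
    intro x h1 h2
    have : x ∈ lhsAttrs m₁ ∩ lhsAttrs m₂ := ⟨h1, h2⟩
    rw [hdisj] at this
    exact this
  constructor
  · rintro E u rfl ⟨a, haE, haL2⟩ a' ha'E haL1
    have haE' : Relation.TransGen (BR m₁ m₂) u a := haE
    have ha'E' : Relation.TransGen (BR m₁ m₂) u a' := ha'E
    have htrans : Relation.TransGen (BR m₁ m₂) a a' := (hTGsymm haE').trans ha'E'
    rcases hTGchain a a' htrans with rfl | ⟨b, hab, ha'b⟩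
    · exact hdisj' _ haL1 haL2
    · -- `a` is in `lhsP m₂` with partner `b`
      obtain ⟨p, hp, hpc⟩ := haL2
      rcases hpc with hpc | hpc
      swap
      · exact absurd hpc (by simp)
      obtain rfl : a = p.1 := Sum.inl.inj hpc
      have hp2 : p.2 = b := hpp p.1 p.2 b
        (Finset.mem_union_right _ (Finset.mem_union_left _ (by simpa using hp))) (hmemU hab)
      have hb2 : Sum.inr b ∈ lhsAttrs m₂ := ⟨p, hp, Or.inr (by rw [hp2])⟩
      -- `a'` is in `lhsP m₁` with partner `b`
      obtain ⟨q, hq, hqc⟩ := haL1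
      rcases hqc with hqc | hqc
      swap
      · exact absurd hqc (by simp)
      obtain rfl : a' = q.1 := Sum.inl.inj hqc
      have hq2 : q.2 = b := hpp q.1 q.2 b
        (Finset.mem_union_left _ (Finset.mem_union_left _ (by simpa using hq))) (hmemU ha'b)
      have hb1 : Sum.inr b ∈ lhsAttrs m₁ := ⟨q, hq, Or.inr (by rw [hq2])⟩
      exact hdisj' _ hb1 hb2
  · rintro E u rfl ⟨b, hbE, hbL2⟩ b' hb'E hb'L1
    have h1 : u = b := hTGBSeq _ _ hbE
    have h2 : u = b' := hTGBSeq _ _ hb'E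
    subst h1
    subst h2
    exact hdisj' _ hb'L1 hbL2
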